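/- For any nonempty family F of GENEOs, the pseudo-metric D^{F}(φ1, φ2) := sup_{F∈F} d_match(D(F(φ1)), D(F(φ2))) satisfies D^{F} ≤ d_G ≤ D_Φ, where d_G is the natural pseudo-distance and D_Φ the sup-norm distance. -/
import Mathlib


/-- `F` is a group equivariant non-expansive operator from `(Φ,G)` to `(Ψ,H)`
associated with the homomorphism `T : G → H`. -/
def IsGENEO {X Y : Type*} (Φ : Set (X → ℝ)) (Ψ : Set (Y → ℝ))
    (G : Subgroup (Equiv.Perm X)) (H : Subgroup (Equiv.Perm Y)) (T : G →* H)
    (F : (X → ℝ) → (Y → ℝ)) : Prop :=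
  (∀ φ ∈ Φ, F φ ∈ Ψ) ∧
  (∀ φ ∈ Φ, ∀ g : G, F (fun x => φ (g.1 x)) = fun y => F φ ((T g).1 y)) ∧
  (∀ φ1 ∈ Φ, ∀ φ2 ∈ Φ, (⨆ y, |F φ1 y - F φ2 y|) ≤ ⨆ x, |φ1 x - φ2 x|)

/-- for any nonempty family `𝓕` of GENEOs,
`D^𝓕(φ1,φ2) := sup_{F∈𝓕} d_match(D(F φ1), D(F φ2))` satisfies `D^𝓕 ≤ d_G ≤ D_Φ`, where
`d_G` is the natural pseudo-distance and `D_Φ` the sup-norm distance. -/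
theorem stmt18 {X Y PD : Type*} [Nonempty X] [Nonempty Y]
    (Φ : Set (X → ℝ)) (Ψ : Set (Y → ℝ))
    (hΦb : ∀ φ ∈ Φ, ∃ C : ℝ, ∀ x, |φ x| ≤ C)
    (hΨb : ∀ ψ ∈ Ψ, ∃ C : ℝ, ∀ y, |ψ y| ≤ C)
    (G : Subgroup (Equiv.Perm X)) (H : Subgroup (Equiv.Perm Y))
    (hG : ∀ g ∈ G, ∀ φ ∈ Φ, (fun x => φ (g x)) ∈ Φ)
    (hH : ∀ h ∈ H, ∀ ψ ∈ Ψ, (fun y => ψ (h y)) ∈ Ψ)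
    (T : G →* H)
    (dmatch : PD → PD → ℝ)
    (hd_nonneg : ∀ p q, 0 ≤ dmatch p q)
    (hd_symm : ∀ p q, dmatch p q = dmatch q p)
    (hd_tri : ∀ p q r, dmatch p r ≤ dmatch p q + dmatch q r)
    (Dgm : (Y → ℝ) → PD)
    (hstab : ∀ ψ1 ψ2 : Y → ℝ, dmatch (Dgm ψ1) (Dgm ψ2) ≤ ⨆ y, |ψ1 y - ψ2 y|)
    (hinv : ∀ ψ : Y → ℝ, ∀ h : Equiv.Perm Y, Dgm (fun y => ψ (h y)) = Dgm ψ)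
    (𝓕 : Set ((X → ℝ) → (Y → ℝ))) (h𝓕ne : 𝓕.Nonempty)
    (h𝓕 : ∀ F ∈ 𝓕, IsGENEO Φ Ψ G H T F)
    (DF : (X → ℝ) → (X → ℝ) → ℝ)
    (hDF : ∀ f1 f2, DF f1 f2 = ⨆ F : 𝓕, dmatch (Dgm (F.1 f1)) (Dgm (F.1 f2)))
    (DΦ : (X → ℝ) → (X → ℝ) → ℝ)
    (hDΦ : ∀ f1 f2, DΦ f1 f2 = ⨆ x, |f1 x - f2 x|)
    (dG : (X → ℝ) → (X → ℝ) → ℝ)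
    (hdG : ∀ f1 f2, dG f1 f2 = ⨅ g : G, DΦ f1 (fun x => f2 (g.1 x))) :
    ∀ φ1 ∈ Φ, ∀ φ2 ∈ Φ, DF φ1 φ2 ≤ dG φ1 φ2 ∧ dG φ1 φ2 ≤ DΦ φ1 φ2 := by
  intro φ1 hφ1 φ2 hφ2
  have hDΦnn : ∀ f1 f2 : X → ℝ, 0 ≤ DΦ f1 f2 := by
    intro f1 f2; rw [hDΦ]; exact Real.iSup_nonneg (fun x => abs_nonneg _)
  have key : ∀ F : 𝓕, ∀ g : G,
      dmatch (Dgm (F.1 φ1)) (Dgm (F.1 φ2)) ≤ DΦ φ1 (fun x => φ2 (g.1 x)) := by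
    intro ⟨F, hF⟩ g
    obtain ⟨hmem, hequiv, hne⟩ := h𝓕 F hF
    have h1 : F (fun x => φ2 (g.1 x)) = fun y => F φ2 ((T g).1 y) := hequiv φ2 hφ2 g
    have h2 : Dgm (F (fun x => φ2 (g.1 x))) = Dgm (F φ2) := by
      rw [h1]; exact hinv (F φ2) ((T g).1)
    calc dmatch (Dgm (F φ1)) (Dgm (F φ2))
        = dmatch (Dgm (F φ1)) (Dgm (F (fun x => φ2 (g.1 x)))) := by rw [h2]
      _ ≤ ⨆ y, |F φ1 y - F (fun x => φ2 (g.1 x)) y| := hstab _ _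
      _ ≤ ⨆ x, |φ1 x - φ2 (g.1 x)| := hne φ1 hφ1 _ (hG g.1 g.2 φ2 hφ2)
      _ = DΦ φ1 (fun x => φ2 (g.1 x)) := (hDΦ _ _).symm
  constructor
  · rw [hDF, hdG]
    haveI : Nonempty 𝓕 := h𝓕ne.to_subtype
    exact ciSup_le fun F => le_ciInf fun g => key F g
  · rw [hdG]
    have hbdd : BddBelow (Set.range fun g : G => DΦ φ1 (fun x => φ2 (g.1 x))) := by
      refine ⟨0, ?_⟩
      rintro y ⟨g, rfl⟩
      exact hDΦnn _ _
    have := ciInf_le hbdd (1 : G)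
    simpa using this
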